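/- Let r := id − d₀⁻¹ ∘ d − d ∘ d₀⁻¹. Then the powers of r stabilize to Π_E: there exists a natural number M such that r^k = Π_E for all k ≥ M. (This is the paper's claim, in the proof of part (ii) of the main theorem, that iterating the homotopy retraction r = Id − d₀⁻¹d − d d₀⁻¹ stabilizes in finitely many steps to the projection Π_E.) -/

import Mathlib

lemma aux_stabilize {R : Type*} [Ring R] (a d h D P Q piE r : R)
    (haa : a * a = 0) (hdd : d * d = 0) (hhh : h * h = 0)
    (hhah : h * a * h = h) (haha : a * h * a = a)
    (hDdef : D = h * d - h * a)
    (hPD : P * D = 1 - P) (hDP : D * P = 1 - P)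
    (hQdef : Q = P * h)
    (hpi : piE = 1 - Q * d - d * Q)
    (hrdef : r = 1 - h * d - d * h)
    (N : ℕ) (hDnil : D ^ (N + 1) = 0) :
    ∀ k : ℕ, N + 2 ≤ k → r ^ k = piE := by
  -- basic derived identities
  have hhd' : h * d = D + h * a := by rw [hDdef, sub_add_cancel]
  have hhD : h * D = 0 := by
    rw [hDdef, mul_sub, ← mul_assoc, ← mul_assoc, hhh, zero_mul, zero_mul, sub_zero]
  have hhaD : h * a * D = D := by
    rw [hDdef, mul_sub, ← mul_assoc, ← mul_assoc, hhah, ← hDdef]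
  have hPrec : P = 1 - D * P := by rw [hDP, sub_sub_cancel]
  have hhP : h * P = h := by
    conv_lhs => rw [hPrec]
    rw [mul_sub, mul_one, ← mul_assoc, hhD, zero_mul, sub_zero]
  have hhaP : h * a * P = h * a + P - 1 := by
    conv_lhs => rw [hPrec]
    rw [mul_sub, mul_one, ← mul_assoc, hhaD, hDP]
    abel
  have hhdP : h * d * P = h * a := by
    rw [hhd', add_mul, hDP, hhaP]
    abel
  have hQh : Q * h = 0 := by rw [hQdef, mul_assoc, hhh, mul_zero]
  have hhQ : h * Q = 0 := by rw [hQdef, ← mul_assoc, hhP, hhh]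
  have hQQ : Q * Q = 0 := by
    rw [hQdef, mul_assoc, ← mul_assoc h P h, hhP, hhh, mul_zero]
  have hQd : Q * d = (1 - P) + P * (h * a) := by
    rw [hQdef, mul_assoc, hhd', mul_add, hPD]
  have hQdh : Q * d * h = h := by
    rw [hQd, add_mul, mul_assoc P (h * a) h, hhah, sub_mul, one_mul]
    abel
  have hhdQ : h * d * Q = h := by
    rw [hQdef, ← mul_assoc, hhdP, hhah]
  have hQdP : Q * d * P = P * (h * a) := by
    rw [hQdef, mul_assoc P h d, mul_assoc P (h * d) P, hhdP]
  have hQdQ : Q * d * Q = Q := by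
    nth_rewrite 2 [hQdef]
    rw [← mul_assoc, hQdP, mul_assoc, hhah, ← hQdef]
  have hpih : piE * h = 0 := by
    rw [hpi, sub_mul, sub_mul, one_mul, hQdh, mul_assoc d Q h, hQh, mul_zero]
    abel
  have hhpi : h * piE = 0 := by
    rw [hpi, mul_sub, mul_sub, mul_one, ← mul_assoc h Q d, hhQ, zero_mul,
      ← mul_assoc h d Q, hhdQ]
    abel
  have hpid : piE * d = d - d * (Q * d) := by
    rw [hpi, sub_mul, sub_mul, one_mul, mul_assoc Q d d, hdd, mul_zero, sub_zero,
      mul_assoc]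
  have hdpi : d * piE = d - d * (Q * d) := by
    rw [hpi, mul_sub, mul_sub, mul_one, ← mul_assoc d d Q, hdd, zero_mul, sub_zero]
  have hpir : piE * r = piE := by
    rw [hrdef, mul_sub, mul_sub, mul_one, ← mul_assoc piE h d, hpih, zero_mul,
      ← mul_assoc piE d h, hpid, sub_mul, mul_assoc d (Q * d) h, hQdh]
    abel
  have hrpi : r * piE = piE := by
    rw [hrdef, sub_mul, sub_mul, one_mul, mul_assoc d h piE, hhpi, mul_zero,
      mul_assoc h d piE, hdpi, mul_sub, ← mul_assoc h d (Q * d), ← mul_assoc (h*d) Q d, hhdQ]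
    abel
  have hpiQ : piE * Q = 0 := by
    rw [hpi, sub_mul, sub_mul, one_mul, hQdQ, mul_assoc d Q Q, hQQ, mul_zero]
    abel
  have hpipi : piE * piE = piE := by
    nth_rewrite 2 [hpi]
    rw [mul_sub, mul_sub, mul_one, ← mul_assoc piE Q d, hpiQ, zero_mul,
      ← mul_assoc piE d Q, hpid, sub_mul, mul_assoc d (Q*d) Q, hQdQ]
    abel
  -- the nilpotent part
  set u : R := Q - h with hudef
  have hu : u = -(D * Q) := by
    have h1 : P - 1 = -(D * P) := by rw [hDP]; abel
    calc u = (P - 1) * h := by rw [hudef, hQdef, sub_mul, one_mul]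
    _ = -(D * P) * h := by rw [h1]
    _ = -(D * Q) := by rw [hQdef, neg_mul, mul_assoc]
  have hQdD : Q * d * D = D := by
    rw [hDdef, mul_sub, ← mul_assoc (Q*d) h d, ← mul_assoc (Q*d) h a, hQdh, ← hDdef]
  have hDQd : ∀ k : ℕ, (D * (Q * d)) ^ (k + 1) = D ^ (k + 1) * (Q * d) := by
    intro k
    induction k with
    | zero => rw [pow_one, pow_one]
    | succ k ih =>
      rw [pow_succ, ih, mul_assoc (D ^ (k+1)) (Q*d) (D * (Q*d)),
        ← mul_assoc (Q*d) D (Q*d), hQdD, ← mul_assoc, ← pow_succ]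
  have huu : u * u = 0 := by
    rw [hudef, sub_mul, mul_sub, mul_sub, hQQ, hQh, hhQ, hhh]
    abel
  set A : R := u * d with hAdef
  set B : R := d * u with hBdef
  have hA : A ^ (N + 1) = 0 := by
    have hA' : A = -(D * (Q * d)) := by rw [hAdef, hu, neg_mul, mul_assoc]
    rw [hA', neg_pow, hDQd N, hDnil, zero_mul, mul_zero]
  have hAB : A * B = 0 := by
    rw [hAdef, hBdef, mul_assoc u d (d * u), ← mul_assoc d d u, hdd, zero_mul, mul_zero]
  have hBA : B * A = 0 := by
    rw [hAdef, hBdef, mul_assoc d u (u * d), ← mul_assoc u u d, huu, zero_mul, mul_zero]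
  have hBpow : ∀ k : ℕ, B ^ (k + 1) = d * (A ^ k * u) := by
    intro k
    induction k with
    | zero => rw [pow_one, pow_zero, one_mul, hBdef]
    | succ k ih =>
      rw [pow_succ, ih, hBdef, ← mul_assoc (d * (A ^ k * u)) d u,
        mul_assoc d (A ^ k * u) d, mul_assoc (A ^ k) u d, ← hAdef,
        ← pow_succ, mul_assoc]
  have hB : B ^ (N + 2) = 0 := by
    rw [hBpow (N + 1), hA, zero_mul, mul_zero]
  have hs : r - piE = A + B := by
    rw [hAdef, hBdef, hudef, hrdef, hpi]
    noncomm_ring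
  set s : R := r - piE with hsdef
  have hspow : ∀ k : ℕ, s ^ (k + 1) = A ^ (k + 1) + B ^ (k + 1) := by
    intro k
    induction k with
    | zero => rw [pow_one, pow_one, pow_one, hs]
    | succ k ih =>
      have e1 : A ^ (k + 1) * B = 0 := by
        rw [pow_succ, mul_assoc, hAB, mul_zero]
      have e2 : B ^ (k + 1) * A = 0 := by
        rw [pow_succ, mul_assoc, hBA, mul_zero]
      rw [pow_succ, ih, hs, add_mul, mul_add, mul_add, e1, e2, ← pow_succ, ← pow_succ]
      abel
  have hsN : s ^ (N + 2) = 0 := by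
    rw [hspow (N + 1), hB, pow_succ, hA, zero_mul, zero_add]
  have hspi : s * piE = 0 := by rw [hsdef, sub_mul, hrpi, hpipi, sub_self]
  have hpis : piE * s = 0 := by rw [hsdef, mul_sub, hpir, hpipi, sub_self]
  have hrr : r = s + piE := by rw [hsdef]; abel
  have hrpow : ∀ k : ℕ, r ^ (k + 1) = s ^ (k + 1) + piE := by
    intro k
    induction k with
    | zero => rw [pow_one, pow_one, hrr]
    | succ k ih =>
      have e1 : s ^ (k + 1) * piE = 0 := by
        rw [pow_succ, mul_assoc, hspi, mul_zero]
      rw [pow_succ, ih, hrr, add_mul, mul_add, mul_add, e1, hpis, hpipi, ← pow_succ]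
      abel
  intro k hk
  obtain ⟨m, rfl⟩ : ∃ m, k = N + 2 + m := ⟨k - (N + 2), by omega⟩
  have hsk : s ^ (N + 1 + m + 1) = 0 := by
    rw [show N + 1 + m + 1 = (N + 2) + m from by omega, pow_add, hsN, zero_mul]
  have := hrpow (N + 1 + m)
  rw [hsk, zero_add] at this
  rw [show N + 2 + m = N + 1 + m + 1 from by omega, this]

/-- The powers of the retraction `r := id − d₀⁻¹ ∘ d − d ∘ d₀⁻¹`
stabilize to `Π_E` in finitely many steps. -/
theorem retraction_powers_stabilize_to_PiE
    {V : Type*} [NormedAddCommGroup V] [InnerProductSpace ℝ V] [FiniteDimensional ℝ V]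
    (d₀ dinv : V →ₗ[ℝ] V) (hd₀ : d₀ ∘ₗ d₀ = 0)
    (hpinv₁ : (LinearMap.range d₀)ᗮ ≤ LinearMap.ker dinv)
    (hpinv₂ : LinearMap.range dinv ≤ (LinearMap.ker d₀)ᗮ)
    (hpinv₃ : ∀ v : V, d₀ (dinv v) = (Submodule.orthogonalProjection (LinearMap.range d₀) v : V))
    (d : V →ₗ[ℝ] V) (hd : d ∘ₗ d = 0)
    (D : V →ₗ[ℝ] V) (hD : D = dinv ∘ₗ (d - d₀))
    (N : ℕ) (hDnil : D ^ (N + 1) = 0)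
    (P : V →ₗ[ℝ] V) (hP : P = ∑ k ∈ Finset.range (N + 1), ((-1 : ℝ)) ^ k • D ^ k)
    (Q : V →ₗ[ℝ] V) (hQ : Q = P ∘ₗ dinv)
    (PiE : V →ₗ[ℝ] V) (hPiE : PiE = LinearMap.id - Q ∘ₗ d - d ∘ₗ Q)
    (r : V →ₗ[ℝ] V) (hr : r = LinearMap.id - dinv ∘ₗ d - d ∘ₗ dinv) :
    ∃ M : ℕ, ∀ k : ℕ, M ≤ k → r ^ k = PiE := by
  -- range d₀ ≤ ker d₀
  have hrange : LinearMap.range d₀ ≤ LinearMap.ker d₀ := by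
    rintro x ⟨y, rfl⟩
    exact LinearMap.ext_iff.mp hd₀ y
  -- dinv ∘ dinv = 0
  have hker : LinearMap.range dinv ≤ LinearMap.ker dinv :=
    le_trans hpinv₂ (le_trans (Submodule.orthogonal_le hrange) hpinv₁)
  have hhh : dinv * dinv = 0 := by
    ext v
    exact hker ⟨v, rfl⟩
  -- dinv ∘ d₀ ∘ dinv = dinv
  have hhah : dinv * d₀ * dinv = dinv := by
    ext v
    simp only [Module.End.mul_apply, LinearMap.zero_apply]
    rw [hpinv₃ v]
    have hmem : v - (Submodule.orthogonalProjection (LinearMap.range d₀) v : V)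
        ∈ LinearMap.ker dinv :=
      hpinv₁ (Submodule.sub_starProjection_mem_orthogonal v)
    have := LinearMap.mem_ker.mp hmem
    rw [map_sub, sub_eq_zero] at this
    exact this.symm
  -- d₀ ∘ dinv ∘ d₀ = d₀
  have haha : d₀ * dinv * d₀ = d₀ := by
    ext v
    simp only [Module.End.mul_apply]
    rw [hpinv₃ (d₀ v)]
    exact Submodule.starProjection_eq_self_iff.mpr ⟨v, rfl⟩
  have haa : d₀ * d₀ = 0 := by rw [Module.End.mul_eq_comp]; exact hd₀
  have hdd : d * d = 0 := by rw [Module.End.mul_eq_comp]; exact hd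
  have hDdef : D = dinv * d - dinv * d₀ := by
    rw [hD, ← Module.End.mul_eq_comp, mul_sub]
  -- geometric series
  have hPgeom : P = ∑ k ∈ Finset.range (N + 1), (-D) ^ k := by
    rw [hP]
    refine Finset.sum_congr rfl fun k _ => ?_
    rw [← neg_one_smul ℝ D, smul_pow]
  have hnegD : (-D) ^ (N + 1) = 0 := by
    rw [neg_pow, hDnil, mul_zero]
  have hPD : P * D = 1 - P := by
    have e := geom_sum_mul (-D) (N + 1)
    rw [← hPgeom, hnegD, zero_sub] at e
    have : P * D = -(P * (-D - 1)) - P := by noncomm_ring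
    rw [this, e]
    noncomm_ring
  have hDP : D * P = 1 - P := by
    have e := mul_geom_sum (-D) (N + 1)
    rw [← hPgeom, hnegD, zero_sub] at e
    have : D * P = -((-D - 1) * P) - P := by noncomm_ring
    rw [this, e]
    noncomm_ring
  have hQdef : Q = P * dinv := by rw [hQ, Module.End.mul_eq_comp]
  have hpi : PiE = 1 - Q * d - d * Q := by
    rw [hPiE, ← Module.End.mul_eq_comp, ← Module.End.mul_eq_comp]
    rfl
  have hrdef : r = 1 - dinv * d - d * dinv := by
    rw [hr, ← Module.End.mul_eq_comp, ← Module.End.mul_eq_comp]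
    rfl
  exact ⟨N + 2, aux_stabilize d₀ d dinv D P Q PiE r haa hdd hhh hhah haha hDdef hPD hDP
    hQdef hpi hrdef N hDnil⟩
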